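/- arXiv:2402.06291 — 4 statements merged into one kernel-verified Lean document; each statement's English description precedes it below -/
import Mathlib

section
/- If V : ℝ≥0 → ℝ is a nonnegative continuously differentiable function along a trajectory satisfying V'(t) ≤ -α V(t)^k for constants α > 0 and 0 < k < 1, then V(t) = 0 for all t ≥ t₀ + V(t₀)^(1-k)/(α(1-k)). -/
open Set

private lemma key_decay
    (V : ℝ → ℝ) (t₀ α k : ℝ) (hα : 0 < α) (hk0 : 0 < k) (hk1 : k < 1)
    (hC1 : ∀ t, t₀ ≤ t → DifferentiableAt ℝ V t)
    (hineq : ∀ t, t₀ ≤ t → 0 < V t → deriv V t ≤ -α * V t ^ k)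
    (a t : ℝ) (ha : t₀ ≤ a) (hat : a ≤ t)
    (hpos : ∀ u ∈ Set.Ioc a t, 0 < V u) :
    V t ^ (1 - k) + α * (1 - k) * (t - a) ≤ V a ^ (1 - k) := by
  have h1k : (0:ℝ) < 1 - k := by linarith
  set g : ℝ → ℝ := fun u => V u ^ (1 - k) + α * (1 - k) * u with hg
  have hd : ∀ u ∈ Set.Ioo a t,
      HasDerivAt g (deriv V u * (1 - k) * V u ^ (1 - k - 1) + α * (1 - k)) u := by
    intro u hu
    have hVu : 0 < V u := hpos u ⟨hu.1, hu.2.le⟩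
    have h1 : HasDerivAt V (deriv V u) u := (hC1 u (ha.trans hu.1.le)).hasDerivAt
    have h2 := h1.rpow_const (p := 1 - k) (Or.inl hVu.ne')
    have h3 : HasDerivAt (fun x : ℝ => α * (1 - k) * x) (α * (1 - k)) u := by
      simpa using (hasDerivAt_id u).const_mul (α * (1 - k))
    exact h2.add h3
  have hmono : AntitoneOn g (Set.Icc a t) := by
    apply antitoneOn_of_deriv_nonpos (convex_Icc a t)
    · have hVc : ContinuousOn V (Set.Icc a t) := fun u hu =>
        ((hC1 u (ha.trans hu.1)).continuousAt).continuousWithinAt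
      exact (hVc.rpow_const (fun u _ => Or.inr h1k.le)).add
        ((continuous_const.mul continuous_id).continuousOn)
    · rw [interior_Icc]
      exact fun u hu => ((hd u hu).differentiableAt).differentiableWithinAt
    · rw [interior_Icc]
      intro u hu
      rw [(hd u hu).deriv]
      have hVu : 0 < V u := hpos u ⟨hu.1, hu.2.le⟩
      have h4 : deriv V u ≤ -α * V u ^ k := hineq u (ha.trans hu.1.le) hVu
      have h5 : (0:ℝ) ≤ (1 - k) * V u ^ (1 - k - 1) := by positivity
      have hkey : V u ^ k * V u ^ (1 - k - 1) = 1 := by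
        rw [← Real.rpow_add hVu]
        norm_num
      have h6 := mul_le_mul_of_nonneg_right h4 h5
      have h7 : -α * V u ^ k * ((1 - k) * V u ^ (1 - k - 1)) = -(α * (1 - k)) := by
        have : -α * V u ^ k * ((1 - k) * V u ^ (1 - k - 1))
            = -(α * (1 - k)) * (V u ^ k * V u ^ (1 - k - 1)) := by ring
        rw [this, hkey, mul_one]
      have h8 : deriv V u * (1 - k) * V u ^ (1 - k - 1)
          = deriv V u * ((1 - k) * V u ^ (1 - k - 1)) := by ring
      linarith
  have := hmono ⟨le_refl a, hat⟩ ⟨hat, le_refl t⟩ hat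
  simp only [hg] at this
  linarith

/-- Finite-time stability via Lyapunov differential inequality (Bhat–Bernstein,
Theorem 4.2, scalar comparison version). -/
theorem finite_time_stability
    (V : ℝ → ℝ) (t₀ α k : ℝ) (hα : 0 < α) (hk0 : 0 < k) (hk1 : k < 1)
    (hVnn : ∀ t, t₀ ≤ t → 0 ≤ V t)
    (hC1 : ∀ t, t₀ ≤ t → DifferentiableAt ℝ V t)
    (hineq : ∀ t, t₀ ≤ t → 0 < V t → deriv V t ≤ -α * V t ^ k) :
    ∀ t, t₀ + V t₀ ^ (1 - k) / (α * (1 - k)) ≤ t → V t = 0 := by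
  intro t ht
  have h1k : (0:ℝ) < 1 - k := by linarith
  have hαk : 0 < α * (1 - k) := mul_pos hα h1k
  have hV0 : 0 ≤ V t₀ := hVnn t₀ le_rfl
  have hdiv : 0 ≤ V t₀ ^ (1 - k) / (α * (1 - k)) :=
    div_nonneg (Real.rpow_nonneg hV0 _) hαk.le
  have hTge : t₀ ≤ t := by linarith
  by_contra hne
  have hVt : 0 < V t := lt_of_le_of_ne (hVnn t hTge) (Ne.symm hne)
  set S := {u ∈ Set.Icc t₀ t | V u = 0} with hS
  by_cases hSne : S.Nonempty
  · have hVc : ContinuousOn V (Set.Icc t₀ t) := fun u hu =>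
      ((hC1 u hu.1).continuousAt).continuousWithinAt
    have hSclosed : IsClosed S := by
      have h := hVc.preimage_isClosed_of_isClosed isClosed_Icc (isClosed_singleton (x := (0:ℝ)))
      have heq : S = Set.Icc t₀ t ∩ V ⁻¹' {0} := by ext u; simp [hS]
      rw [heq]; exact h
    have hSbdd : BddAbove S := BddAbove.mono (fun u hu => hu.1) bddAbove_Icc
    set s := sSup S with hs
    have hsS : s ∈ S := hSclosed.csSup_mem hSne hSbdd
    obtain ⟨⟨hs0, hst⟩, hVs⟩ := hsS
    have hslt : s < t := lt_of_le_of_ne hst (fun h => hVt.ne' (h ▸ hVs))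
    have hpos : ∀ u ∈ Set.Ioc s t, 0 < V u := by
      intro u hu
      rcases lt_or_eq_of_le (hVnn u (hs0.trans hu.1.le)) with h | h
      · exact h
      · exfalso
        have huS : u ∈ S := ⟨⟨hs0.trans hu.1.le, hu.2⟩, h.symm⟩
        exact absurd (le_csSup hSbdd huS) (not_le.mpr hu.1)
    have := key_decay V t₀ α k hα hk0 hk1 hC1 hineq s t hs0 hslt.le hpos
    rw [hVs, Real.zero_rpow h1k.ne'] at this
    nlinarith [Real.rpow_pos_of_pos hVt (1 - k)]
  · have hpos : ∀ u ∈ Set.Ioc t₀ t, 0 < V u := by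
      intro u hu
      rcases lt_or_eq_of_le (hVnn u hu.1.le) with h | h
      · exact h
      · exact absurd ⟨⟨hu.1.le, hu.2⟩, h.symm⟩ (fun hx => hSne ⟨u, hx⟩)
    have := key_decay V t₀ α k hα hk0 hk1 hC1 hineq t₀ t le_rfl hTge hpos
    have h9 : V t₀ ^ (1 - k) / (α * (1 - k)) ≤ t - t₀ := by linarith
    have hge : V t₀ ^ (1 - k) ≤ (t - t₀) * (α * (1 - k)) := (div_le_iff₀ hαk).mp h9
    nlinarith [Real.rpow_pos_of_pos hVt (1 - k)]
end

section
/- If a nonnegative C¹ function V : [t₀, t_p) → ℝ satisfies V'(t) ≤ -η(e^{V(t)} - 1)/(e^{V(t)}(t_p - t)) for all t ∈ [t₀, t_p), with η > 1, then V(t) → 0 as t → t_p⁻. -/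
/-- Predefined-time stability Lyapunov lemma: a nonnegative C¹ function satisfying
`V' ≤ -η (e^V - 1)/(e^V (t_p - t))` on `[t₀, t_p)` with `η > 1` tends to `0` as `t → t_p⁻`. -/
theorem predefined_time_lyapunov
    (V : ℝ → ℝ) (t₀ tp η : ℝ) (ht : t₀ < tp) (hη : 1 < η)
    (hVnn : ∀ t ∈ Set.Ico t₀ tp, 0 ≤ V t)
    (hC1 : ∀ t ∈ Set.Ico t₀ tp, DifferentiableAt ℝ V t)
    (hineq : ∀ t ∈ Set.Ico t₀ tp,
      deriv V t ≤ -η * (Real.exp (V t) - 1) / (Real.exp (V t) * (tp - t))) :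
    Filter.Tendsto V (nhdsWithin tp (Set.Ico t₀ tp)) (nhds 0) := by
  have hηpos : 0 < η := lt_trans one_pos hη
  set F : ℝ → ℝ := fun t => (Real.exp (V t) - 1) * (tp - t) ^ (-η) with hF
  have hpos : ∀ t ∈ Set.Ico t₀ tp, 0 < tp - t := fun t htI => sub_pos.2 htI.2
  -- derivative facts
  have hFd : ∀ x ∈ Set.Ioo t₀ tp, HasDerivAt F
      ((Real.exp (V x) * deriv V x) * (tp - x) ^ (-η)
        + (Real.exp (V x) - 1) * ((-1) * (-η) * (tp - x) ^ (-η - 1))) x := by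
    intro x hx
    have hxI : x ∈ Set.Ico t₀ tp := ⟨le_of_lt hx.1, hx.2⟩
    have hx0 : 0 < tp - x := hpos x hxI
    have hV' : HasDerivAt V (deriv V x) x := (hC1 x hxI).hasDerivAt
    have h1 : HasDerivAt (fun t => Real.exp (V t) - 1) (Real.exp (V x) * deriv V x) x :=
      (hV'.exp).sub_const 1
    have h2 : HasDerivAt (fun t : ℝ => tp - t) (-1) x := by
      simpa using (hasDerivAt_id x).const_sub tp
    have h3 : HasDerivAt (fun t => (tp - t) ^ (-η)) ((-1) * (-η) * (tp - x) ^ (-η - 1)) x :=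
      h2.rpow_const (Or.inl (ne_of_gt hx0))
    exact h1.mul h3
  have hderivF : ∀ x ∈ Set.Ioo t₀ tp, deriv F x ≤ 0 := by
    intro x hx
    have hxI : x ∈ Set.Ico t₀ tp := ⟨le_of_lt hx.1, hx.2⟩
    have hx0 : 0 < tp - x := hpos x hxI
    rw [(hFd x hx).deriv]
    set A := Real.exp (V x) with hA
    have hApos : 0 < A := Real.exp_pos _
    have hA1 : 1 ≤ A := by
      rw [hA]; simpa using Real.one_le_exp (hVnn x hxI)
    set C := (tp - x) ^ (-η - 1) with hC
    have hCpos : 0 < C := Real.rpow_pos_of_pos hx0 _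
    have hB : (tp - x) ^ (-η) = C * (tp - x) := by
      rw [hC, ← Real.rpow_add_one (ne_of_gt hx0) (-η - 1)]
      ring_nf
    -- key inequality: deriv V x * (A * (tp - x)) ≤ -η * (A - 1)
    have hkey : deriv V x * (A * (tp - x)) ≤ -η * (A - 1) := by
      have hden : 0 < A * (tp - x) := mul_pos hApos hx0
      have := hineq x hxI
      rw [div_eq_mul_inv] at this
      calc deriv V x * (A * (tp - x))
          ≤ (-η * (A - 1) * (A * (tp - x))⁻¹) * (A * (tp - x)) :=
            mul_le_mul_of_nonneg_right this hden.le
        _ = -η * (A - 1) := by field_simp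
    have hmul := mul_le_mul_of_nonneg_left hkey hCpos.le
    rw [hB]
    nlinarith [hmul, hCpos]
  have hVcont : ContinuousOn V (Set.Ico t₀ tp) :=
    fun t htI => (hC1 t htI).continuousAt.continuousWithinAt
  have hFcont : ContinuousOn F (Set.Ico t₀ tp) := by
    apply ContinuousOn.mul
    · exact (Real.continuous_exp.comp_continuousOn hVcont).sub continuousOn_const
    · exact (continuousOn_const.sub continuousOn_id).rpow_const
        (fun t htI => Or.inl (ne_of_gt (hpos t htI)))
  have hanti : AntitoneOn F (Set.Ico t₀ tp) := by
    apply antitoneOn_of_deriv_nonpos (convex_Ico t₀ tp) hFcont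
    · intro x hx
      rw [interior_Ico] at hx
      exact ((hFd x hx).differentiableAt).differentiableWithinAt
    · intro x hx
      rw [interior_Ico] at hx
      exact hderivF x hx
  have ht0mem : t₀ ∈ Set.Ico t₀ tp := ⟨le_refl _, ht⟩
  -- bound: exp (V t) - 1 ≤ F t₀ * (tp - t) ^ η
  have hbound : ∀ t ∈ Set.Ico t₀ tp, Real.exp (V t) - 1 ≤ F t₀ * (tp - t) ^ η := by
    intro t htI
    have h1 : F t ≤ F t₀ := hanti ht0mem htI htI.1
    have hx0 : 0 < tp - t := hpos t htI
    have hcancel : (tp - t) ^ (-η) * (tp - t) ^ η = 1 := by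
      rw [← Real.rpow_add hx0]; simp
    have := mul_le_mul_of_nonneg_right h1 (Real.rpow_pos_of_pos hx0 η).le
    calc Real.exp (V t) - 1
        = (Real.exp (V t) - 1) * ((tp - t) ^ (-η) * (tp - t) ^ η) := by
          rw [hcancel, mul_one]
      _ = F t * (tp - t) ^ η := by rw [hF]; ring
      _ ≤ F t₀ * (tp - t) ^ η := this
  -- tendsto of (tp - t) ^ η to 0
  have h0 : Filter.Tendsto (fun t => tp - t) (nhdsWithin tp (Set.Ico t₀ tp)) (nhds 0) := by
    have : Filter.Tendsto (fun t : ℝ => tp - t) (nhds tp) (nhds (tp - tp)) :=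
      (continuous_const.sub continuous_id).tendsto tp
    simpa using this.mono_left nhdsWithin_le_nhds
  have hrpow0 : Filter.Tendsto (fun t => (tp - t) ^ η)
      (nhdsWithin tp (Set.Ico t₀ tp)) (nhds 0) := by
    have hc : ContinuousAt (fun s : ℝ => s ^ η) 0 :=
      Real.continuousAt_rpow_const 0 η (Or.inr hηpos.le)
    have := hc.tendsto.comp h0
    simpa [Real.zero_rpow (ne_of_gt hηpos), Function.comp_def] using this
  have hg : Filter.Tendsto (fun t => 1 + F t₀ * (tp - t) ^ η)
      (nhdsWithin tp (Set.Ico t₀ tp)) (nhds 1) := by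
    have := Filter.Tendsto.const_add (1 : ℝ) ((hrpow0.const_mul (F t₀)))
    simpa using this
  have hexpV : Filter.Tendsto (fun t => Real.exp (V t))
      (nhdsWithin tp (Set.Ico t₀ tp)) (nhds 1) := by
    apply tendsto_of_tendsto_of_tendsto_of_le_of_le' tendsto_const_nhds hg
    · filter_upwards [self_mem_nhdsWithin] with t htI
      simpa using Real.one_le_exp (hVnn t htI)
    · filter_upwards [self_mem_nhdsWithin] with t htI
      linarith [hbound t htI]
  have hlog : Filter.Tendsto (fun t => Real.log (Real.exp (V t)))
      (nhdsWithin tp (Set.Ico t₀ tp)) (nhds 0) := by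
    have hc : ContinuousAt Real.log 1 := Real.continuousAt_log one_ne_zero
    have := hc.tendsto.comp hexpV
    simpa [Function.comp_def] using this
  have : (fun t => Real.log (Real.exp (V t))) = V := by
    funext t; exact Real.log_exp _
  rwa [this] at hlog
end

section
/- For the heading error dynamics e'(t) = -η(e^{e(t)} - 1)/(e^{e(t)}(t_p - t)) with η > 1, the Lyapunov function V(e) = e²/2 satisfies V'(t) = e·e' ≤ -η|e|(e^{|e|} - 1)/(e^{|e|}(t_p - t)) ≤ 0 for all t ∈ [t₀, t_p). -/
lemma key_ineq (z : ℝ) :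
    |z| * (Real.exp |z| - 1) / Real.exp |z| ≤ z * (Real.exp z - 1) / Real.exp z := by
  rcases le_or_gt 0 z with h | h
  · rw [abs_of_nonneg h]
  · rw [abs_of_neg h, Real.exp_neg]
    have ha : 0 < Real.exp z := Real.exp_pos z
    have ha1 : Real.exp z < 1 := Real.exp_lt_one_iff.mpr h
    have hL : -z * ((Real.exp z)⁻¹ - 1) / (Real.exp z)⁻¹ = z * (Real.exp z - 1) := by
      field_simp
      ring
    rw [hL, le_div_iff₀ ha]
    have hp : 0 ≤ z * (Real.exp z - 1) := by nlinarith
    nlinarith [mul_nonneg hp (le_of_lt (sub_pos.mpr ha1))]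

/-- For the heading error dynamics `e' = -η(e^e - 1)/(e^e (t_p - t))` with `η > 1`, the
Lyapunov function `V = e²/2` satisfies
`V' = e·e' ≤ -η|e|(e^{|e|} - 1)/(e^{|e|}(t_p - t)) ≤ 0` on `[t₀, t_p)`. -/
theorem heading_error_lyapunov_decrease
    (e : ℝ → ℝ) (t₀ tp η : ℝ) (hη : 1 < η)
    (hode : ∀ t ∈ Set.Ico t₀ tp,
      HasDerivAt e (-η * (Real.exp (e t) - 1) / (Real.exp (e t) * (tp - t))) t) :
    ∀ t ∈ Set.Ico t₀ tp,
      deriv (fun s => e s ^ 2 / 2) t = e t * deriv e t ∧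
      deriv (fun s => e s ^ 2 / 2) t
        ≤ -η * |e t| * (Real.exp |e t| - 1) / (Real.exp |e t| * (tp - t)) ∧
      -η * |e t| * (Real.exp |e t| - 1) / (Real.exp |e t| * (tp - t)) ≤ 0 := by
  intro t ht
  have h := hode t ht
  have htp : 0 < tp - t := by linarith [ht.2]
  have hE : 0 < Real.exp (e t) := Real.exp_pos _
  have hE' : 0 < Real.exp |e t| := Real.exp_pos _
  have hE'1 : 1 ≤ Real.exp |e t| := Real.one_le_exp (abs_nonneg _)
  have hV : HasDerivAt (fun s => e s ^ 2 / 2)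
      (e t * (-η * (Real.exp (e t) - 1) / (Real.exp (e t) * (tp - t)))) t := by
    have : HasDerivAt (fun s => e s ^ 2 / 2)
        (((2 : ℕ) : ℝ) * e t ^ (2 - 1) * (-η * (Real.exp (e t) - 1) / (Real.exp (e t) * (tp - t))) / 2) t :=
      (h.pow 2).div_const 2
    convert this using 1
    ring
  have hderiv : deriv (fun s => e s ^ 2 / 2) t
      = e t * (-η * (Real.exp (e t) - 1) / (Real.exp (e t) * (tp - t))) := hV.deriv
  refine ⟨?_, ?_, ?_⟩
  · rw [hderiv, h.deriv]
  · rw [hderiv]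
    have hc : -η / (tp - t) ≤ 0 := by
      apply div_nonpos_of_nonpos_of_nonneg <;> linarith
    have h1 : e t * (-η * (Real.exp (e t) - 1) / (Real.exp (e t) * (tp - t)))
        = (-η / (tp - t)) * (e t * (Real.exp (e t) - 1) / Real.exp (e t)) := by
      field_simp
    have h2 : -η * |e t| * (Real.exp |e t| - 1) / (Real.exp |e t| * (tp - t))
        = (-η / (tp - t)) * (|e t| * (Real.exp |e t| - 1) / Real.exp |e t|) := by
      field_simp
    rw [h1, h2]
    exact mul_le_mul_of_nonpos_left (key_ineq (e t)) hc
  · apply div_nonpos_of_nonpos_of_nonneg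
    · have hp : 0 ≤ |e t| * (Real.exp |e t| - 1) :=
        mul_nonneg (abs_nonneg _) (by linarith)
      nlinarith [mul_nonneg (le_of_lt (lt_trans one_pos hη)) hp]
    · positivity
end

section
/- Let p(t) = (x(t), y(t)) satisfy x' = v·cos(ψ_dg), y' = v·sin(ψ_dg) where ψ_dg = atan2(y_w - y, x_w - x), v > 0, and p(t) ≠ p_w. Then the squared distance V_w(t) = ‖p(t) - p_w‖²/2 satisfies V_w'(t) = -v·‖p(t) - p_w‖ = -√2·v·V_w(t)^{1/2}. -/
/-- Two-argument arctangent `atan2 y x`, realized as the argument of `x + y i`. -/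
noncomputable def atan2 (y x : ℝ) : ℝ := Complex.arg ⟨x, y⟩

/-- Line-of-sight guidance: moving at speed `v` along the heading
`ψ_dg = atan2 (y_w - y, x_w - x)`, the half squared distance `V_w = ‖p - p_w‖²/2` satisfies
`V_w' = -v‖p - p_w‖ = -√2·v·V_w^{1/2}`. -/
theorem los_squared_distance_derivative
    (x y : ℝ → ℝ) (xw yw v : ℝ) (hv : 0 < v)
    (hx : ∀ t, HasDerivAt x (v * Real.cos (atan2 (yw - y t) (xw - x t))) t)
    (hy : ∀ t, HasDerivAt y (v * Real.sin (atan2 (yw - y t) (xw - x t))) t)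
    (hne : ∀ t, (x t, y t) ≠ (xw, yw)) :
    ∀ t,
      HasDerivAt (fun s => ((x s - xw) ^ 2 + (y s - yw) ^ 2) / 2)
        (-v * Real.sqrt ((x t - xw) ^ 2 + (y t - yw) ^ 2)) t ∧
      -v * Real.sqrt ((x t - xw) ^ 2 + (y t - yw) ^ 2)
        = -(Real.sqrt 2) * v * (((x t - xw) ^ 2 + (y t - yw) ^ 2) / 2) ^ ((1 : ℝ) / 2) := by
  intro t
  set a := xw - x t with ha
  set b := yw - y t with hb
  clear_value a b
  have hz : (⟨a, b⟩ : ℂ) ≠ 0 := by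
    intro h
    apply hne t
    have h1 : a = 0 := congrArg Complex.re h
    have h2 : b = 0 := congrArg Complex.im h
    have : x t = xw := by linarith [h1]
    have : y t = yw := by linarith [h2]
    simp_all
  have habs : ‖(⟨a, b⟩ : ℂ)‖ = Real.sqrt (a ^ 2 + b ^ 2) := by
    rw [Complex.norm_def, Complex.normSq_mk]; ring_nf
  have hrpos : 0 < Real.sqrt (a ^ 2 + b ^ 2) := by
    rw [← habs]; exact norm_pos_iff.mpr hz
  have hcos : Real.cos (atan2 b a) = a / Real.sqrt (a ^ 2 + b ^ 2) := by
    rw [atan2, Complex.cos_arg hz, habs]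
  have hsin : Real.sin (atan2 b a) = b / Real.sqrt (a ^ 2 + b ^ 2) := by
    rw [atan2, Complex.sin_arg, habs]
  have hS : (x t - xw) ^ 2 + (y t - yw) ^ 2 = a ^ 2 + b ^ 2 := by
    simp [ha, hb]; ring
  have hsq : Real.sqrt (a ^ 2 + b ^ 2) * Real.sqrt (a ^ 2 + b ^ 2) = a ^ 2 + b ^ 2 :=
    Real.mul_self_sqrt (by positivity)
  have hax : x t - xw = -a := by rw [ha]; ring
  have hbx : y t - yw = -b := by rw [hb]; ring
  constructor
  · have hd := ((((hx t).sub_const xw).pow 2).add (((hy t).sub_const yw).pow 2)).div_const 2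
    norm_num at hd
    convert hd using 1
    case e'_4 => rfl
    case e'_5 => rfl
    rw [← hb, ← ha, hcos, hsin, hS, hax, hbx]
    have hpos : (0:ℝ) < a ^ 2 + b ^ 2 := Real.sqrt_pos.mp hrpos
    field_simp
    rw [Real.sq_sqrt hpos.le]; ring
  · rw [hS, ← Real.sqrt_eq_rpow]
    have h2 : Real.sqrt 2 * Real.sqrt ((a ^ 2 + b ^ 2) / 2) = Real.sqrt (a ^ 2 + b ^ 2) := by
      rw [← Real.sqrt_mul (by norm_num : (0:ℝ) ≤ 2)]
      congr 1
      ring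
    linear_combination v * h2
end
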